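/- arXiv:2106.13624 — 8 statements merged into one kernel-verified Lean document; each statement's English description precedes it below -/
import Mathlib

section
/- The function g(u) = (e^u − u − 1)/u², extended continuously by g(0) = 1/2, is non-decreasing on the real line. -/
open Real

private lemma hasDerivAt_h (u : ℝ) :
    HasDerivAt (fun u : ℝ => (u - 2) * Real.exp u + u + 2)
      ((u - 1) * Real.exp u + 1) u := by
  have h1 : HasDerivAt (fun u : ℝ => (u - 2) * Real.exp u)
      (1 * Real.exp u + (u - 2) * Real.exp u) u :=
    (((hasDerivAt_id u).sub_const 2).mul (Real.hasDerivAt_exp u))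
  have h2 := (h1.add (hasDerivAt_id u)).add_const 2
  refine h2.congr_deriv ?_
  ring

private lemma hderiv_nonneg (u : ℝ) : 0 ≤ (u - 1) * Real.exp u + 1 := by
  have h1 := Real.add_one_le_exp (-u)
  have h2 := Real.exp_pos u
  have h3 : Real.exp u * Real.exp (-u) = 1 := by
    rw [← Real.exp_add]; simp
  nlinarith

private lemma hmono : Monotone (fun u : ℝ => (u - 2) * Real.exp u + u + 2) := by
  apply monotone_of_deriv_nonneg
  · exact fun u => (hasDerivAt_h u).differentiableAt
  · intro u
    rw [(hasDerivAt_h u).deriv]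
    exact hderiv_nonneg u

private lemma h_nonneg {u : ℝ} (hu : 0 ≤ u) : 0 ≤ (u - 2) * Real.exp u + u + 2 := by
  have := hmono hu
  simp [Real.exp_zero] at this
  linarith

private lemma h_nonpos {u : ℝ} (hu : u ≤ 0) : (u - 2) * Real.exp u + u + 2 ≤ 0 := by
  have := hmono hu
  simp [Real.exp_zero] at this
  linarith

private lemma hasDerivAt_f {u : ℝ} (hu : u ≠ 0) :
    HasDerivAt (fun u : ℝ => (Real.exp u - u - 1) / u ^ 2)
      (((u - 2) * Real.exp u + u + 2) / u ^ 3) u := by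
  have htop : HasDerivAt (fun u : ℝ => Real.exp u - u - 1) (Real.exp u - 1) u := by
    have := ((Real.hasDerivAt_exp u).sub (hasDerivAt_id u)).sub_const 1
    simpa using this
  have hbot : HasDerivAt (fun u : ℝ => u ^ 2) ((2 : ℕ) * u ^ 1) u := hasDerivAt_pow 2 u
  have := htop.div hbot (pow_ne_zero 2 hu)
  refine this.congr_deriv ?_
  field_simp
  ring

private lemma monoOn_pos : MonotoneOn (fun u : ℝ => (Real.exp u - u - 1) / u ^ 2)
    (Set.Ioi (0 : ℝ)) := by
  apply monotoneOn_of_deriv_nonneg (convex_Ioi 0)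
  · intro x hx
    exact ((hasDerivAt_f (ne_of_gt hx)).differentiableAt).continuousAt.continuousWithinAt
  · intro x hx
    rw [interior_Ioi] at hx
    exact ((hasDerivAt_f (ne_of_gt hx)).differentiableAt).differentiableWithinAt
  · intro x hx
    rw [interior_Ioi] at hx
    rw [(hasDerivAt_f (ne_of_gt hx)).deriv]
    exact div_nonneg (h_nonneg (le_of_lt hx)) (le_of_lt (pow_pos hx 3))

private lemma monoOn_neg : MonotoneOn (fun u : ℝ => (Real.exp u - u - 1) / u ^ 2)
    (Set.Iio (0 : ℝ)) := by
  apply monotoneOn_of_deriv_nonneg (convex_Iio 0)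
  · intro x hx
    exact ((hasDerivAt_f (ne_of_lt hx)).differentiableAt).continuousAt.continuousWithinAt
  · intro x hx
    rw [interior_Iio] at hx
    exact ((hasDerivAt_f (ne_of_lt hx)).differentiableAt).differentiableWithinAt
  · intro x hx
    rw [interior_Iio] at hx
    rw [(hasDerivAt_f (ne_of_lt hx)).deriv]
    have h3 : x ^ 3 < 0 := Odd.pow_neg ⟨1, by norm_num⟩ hx
    rw [div_nonneg_iff]
    exact Or.inr ⟨h_nonpos (le_of_lt hx), le_of_lt h3⟩

private lemma quad_le_exp {y : ℝ} (hy : 0 ≤ y) : 1 + y + y ^ 2 / 2 ≤ Real.exp y := by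
  have := Real.sum_le_exp_of_nonneg hy 3
  simp [Finset.sum_range_succ, Nat.factorial] at this
  nlinarith

private lemma exp_le_quad {x : ℝ} (hx : x ≤ 0) : Real.exp x ≤ 1 + x + x ^ 2 / 2 := by
  have hd : ∀ u : ℝ, HasDerivAt (fun u : ℝ => Real.exp u - 1 - u - u ^ 2 / 2)
      (Real.exp u - 1 - u) u := by
    intro u
    have := (((Real.hasDerivAt_exp u).sub_const 1).sub (hasDerivAt_id u)).sub
      (((hasDerivAt_pow 2 u)).div_const 2)
    refine this.congr_deriv ?_
    push_cast; ring
  have hmono2 : Monotone (fun u : ℝ => Real.exp u - 1 - u - u ^ 2 / 2) := by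
    apply monotone_of_deriv_nonneg (fun u => (hd u).differentiableAt)
    intro u
    rw [(hd u).deriv]
    linarith [Real.add_one_le_exp u]
  have := hmono2 hx
  simp [Real.exp_zero] at this
  linarith

theorem bennett_phi_div_sq_monotone :
    Monotone (fun u : ℝ =>
      if u = 0 then (1 : ℝ) / 2 else (Real.exp u - u - 1) / u ^ 2) := by
  have key_pos : ∀ y : ℝ, 0 < y → (1 : ℝ) / 2 ≤ (Real.exp y - y - 1) / y ^ 2 := by
    intro y hy
    rw [le_div_iff₀ (by positivity)]
    have := quad_le_exp hy.le
    nlinarith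
  have key_neg : ∀ x : ℝ, x < 0 → (Real.exp x - x - 1) / x ^ 2 ≤ (1 : ℝ) / 2 := by
    intro x hx
    rw [div_le_iff₀ (pow_pos (abs_pos.mpr (ne_of_lt hx)) 2 |>.trans_le (by rw [sq_abs]))]
    have := exp_le_quad hx.le
    nlinarith
  intro x y hxy
  simp only
  rcases lt_trichotomy x 0 with hx | hx | hx
  · rw [if_neg (ne_of_lt hx)]
    rcases lt_trichotomy y 0 with hy | hy | hy
    · rw [if_neg (ne_of_lt hy)]
      exact monoOn_neg hx hy hxy
    · rw [if_pos hy]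
      exact key_neg x hx
    · rw [if_neg (ne_of_gt hy)]
      exact (key_neg x hx).trans (key_pos y hy)
  · subst hx
    rw [if_pos rfl]
    rcases eq_or_lt_of_le hxy with h | h
    · rw [if_pos h.symm]
    · rw [if_neg (ne_of_gt h)]
      exact key_pos y h
  · have hy : 0 < y := lt_of_lt_of_le hx hxy
    rw [if_neg (ne_of_gt hx), if_neg (ne_of_gt hy)]
    exact monoOn_pos hx hy hxy
end

section
/- Let b > 0 and let Z₁, …, Zₙ be i.i.d. zero-mean real random variables with finite variance satisfying Zᵢ ≤ b almost surely for all i. Let Mₙ = Σᵢ Zᵢ, Vₙ = Σᵢ E[Zᵢ²], and φ(u) = e^u − u − 1. Then for every λ > 0, E[exp(λ Mₙ − (φ(bλ)/b²) Vₙ)] ≤ 1. -/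
open MeasureTheory ProbabilityTheory

lemma exp_tsum' (x : ℝ) : Real.exp x = ∑' n : ℕ, x ^ n / n.factorial := by
  rw [Real.exp_eq_exp_ℝ, NormedSpace.exp_eq_tsum_div]

lemma phi_eq (x : ℝ) :
    Real.exp x - x - 1 = ∑' n : ℕ, x ^ (n + 2) / (n + 2).factorial := by
  have hs := Real.summable_pow_div_factorial x
  have h := Summable.sum_add_tsum_nat_add 2 hs
  rw [exp_tsum' x, ← h]
  simp [Finset.sum_range_succ, Nat.factorial]
  ring

lemma summable_phi (x : ℝ) :
    Summable (fun n : ℕ => x ^ (n + 2) / (n + 2).factorial) :=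
  (summable_nat_add_iff 2).2 (Real.summable_pow_div_factorial x)

lemma mono_aux {u v : ℝ} (hu : 0 ≤ u) (huv : u ≤ v) :
    v ^ 2 * (Real.exp u - u - 1) ≤ u ^ 2 * (Real.exp v - v - 1) := by
  rw [phi_eq, phi_eq, ← tsum_mul_left, ← tsum_mul_left]
  refine Summable.tsum_le_tsum (fun n => ?_) ((summable_phi u).mul_left _)
    ((summable_phi v).mul_left _)
  have hc : (0:ℝ) < (n + 2).factorial := by positivity
  rw [mul_div_assoc', mul_div_assoc', div_le_div_iff₀ hc hc]
  have h1 : u ^ n ≤ v ^ n := pow_le_pow_left₀ hu huv n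
  have h2 : v ^ 2 * u ^ (n + 2) = (u ^ 2 * v ^ 2) * u ^ n := by ring
  have h3 : u ^ 2 * v ^ (n + 2) = (u ^ 2 * v ^ 2) * v ^ n := by ring
  have h4 : v ^ 2 * u ^ (n + 2) ≤ u ^ 2 * v ^ (n + 2) := by
    rw [h2, h3]; exact mul_le_mul_of_nonneg_left h1 (by positivity)
  nlinarith [hc]

lemma quad_le_phi {v : ℝ} (hv : 0 ≤ v) : v ^ 2 / 2 ≤ Real.exp v - v - 1 := by
  rw [phi_eq]
  have h : v ^ 2 / 2 = v ^ (0 + 2) / (0 + 2).factorial := by norm_num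
  rw [h]
  exact Summable.le_tsum (summable_phi v) 0 (fun j _ => by positivity)

lemma neg_phi {u : ℝ} (hu : u ≤ 0) : Real.exp u - u - 1 ≤ u ^ 2 / 2 := by
  have hf : Antitone (fun u : ℝ => 1 + u + u ^ 2 / 2 - Real.exp u) := by
    apply antitone_of_deriv_nonpos
    · fun_prop
    · intro x
      have hd : HasDerivAt (fun u : ℝ => 1 + u + u ^ 2 / 2 - Real.exp u)
          (1 + x - Real.exp x) x := by
        have h1 : HasDerivAt (fun u : ℝ => 1 + u + u ^ 2 / 2 - Real.exp u)
            ((0 + 1 + 2 * x ^ 1 / 2) - Real.exp x) x := by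
          exact (((hasDerivAt_const x (1:ℝ)).add (hasDerivAt_id x)).add
            ((hasDerivAt_pow 2 x).div_const 2)).sub (Real.hasDerivAt_exp x)
        convert h1 using 1; ring
      rw [hd.deriv]
      nlinarith [Real.add_one_le_exp x]
  have := hf hu
  simp only [Real.exp_zero] at this
  nlinarith

lemma key_ineq {b l z : ℝ} (hb : 0 < b) (hl : 0 < l) (hz : z ≤ b) :
    Real.exp (l * z) ≤ 1 + l * z
      + (Real.exp (b * l) - b * l - 1) / b ^ 2 * z ^ 2 := by
  have hv : 0 < b * l := mul_pos hb hl
  have hphi_v : 0 ≤ Real.exp (b * l) - b * l - 1 := by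
    nlinarith [Real.add_one_le_exp (b * l)]
  have hgoal : Real.exp (l * z) - l * z - 1
      ≤ (Real.exp (b * l) - b * l - 1) / b ^ 2 * z ^ 2 := by
    rw [div_mul_eq_mul_div, le_div_iff₀ (by positivity)]
    rcases le_or_gt 0 (l * z) with hu | hu
    · have huv : l * z ≤ b * l := by nlinarith
      have h := mono_aux hu huv
      have hu2 : (l * z) ^ 2 = l ^ 2 * z ^ 2 := by ring
      have hv2 : (b * l) ^ 2 = b ^ 2 * l ^ 2 := by ring
      rw [hu2, hv2] at h
      nlinarith [mul_pos hl hl, sq_nonneg z]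
    · have h1 : Real.exp (l * z) - l * z - 1 ≤ (l * z) ^ 2 / 2 :=
        neg_phi hu.le
      have h2 : (b * l) ^ 2 / 2 ≤ Real.exp (b * l) - b * l - 1 :=
        quad_le_phi hv.le
      nlinarith [sq_nonneg z, sq_nonneg b, sq_nonneg l, sq_nonneg (l * z),
        mul_pos hb hb, mul_pos hl hl]
  linarith

theorem bennett_lemma
    {Ω : Type*} [MeasurableSpace Ω] (P : Measure Ω) [IsProbabilityMeasure P]
    (n : ℕ) (Z : Fin n → Ω → ℝ) (hmeas : ∀ i, Measurable (Z i))
    (hindep : iIndepFun Z P)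
    (hident : ∀ i j, IdentDistrib (Z i) (Z j) P P)
    (b l : ℝ) (hb : 0 < b) (hl : 0 < l)
    (hmean : ∀ i, ∫ ω, Z i ω ∂P = 0)
    (h2 : ∀ i, Integrable (fun ω => (Z i ω) ^ 2) P)
    (hbd : ∀ i, ∀ᵐ ω ∂P, Z i ω ≤ b) :
    ∫ ω, Real.exp (l * (∑ i, Z i ω)
        - (Real.exp (b * l) - b * l - 1) / b ^ 2 * ∑ i, ∫ ω', (Z i ω') ^ 2 ∂P) ∂P
      ≤ 1 := by
  set C := (Real.exp (b * l) - b * l - 1) / b ^ 2 with hCdef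
  have hC : 0 ≤ C := by
    apply div_nonneg _ (by positivity)
    nlinarith [Real.add_one_le_exp (b * l)]
  set V := ∑ i, ∫ ω', (Z i ω') ^ 2 ∂P with hVdef
  have hZint : ∀ i, Integrable (Z i) P := by
    intro i
    refine (((h2 i).add (integrable_const 1)).div_const 2).mono'
      (hmeas i).aestronglyMeasurable ?_
    filter_upwards with ω
    rw [Real.norm_eq_abs]
    simp only [Pi.add_apply]
    nlinarith [sq_nonneg (|Z i ω| - 1), sq_abs (Z i ω)]
  have hbound : ∀ i, Integrable (fun ω => 1 + l * Z i ω + C * (Z i ω) ^ 2) P :=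
    fun i => ((integrable_const 1).add ((hZint i).const_mul l)).add
      ((h2 i).const_mul C)
  have hexpint : ∀ i, Integrable (fun ω => Real.exp (l * Z i ω)) P := by
    intro i
    refine (hbound i).mono'
      ((hmeas i).const_mul l).exp.aestronglyMeasurable ?_
    filter_upwards [hbd i] with ω hω
    rw [Real.norm_eq_abs, abs_of_pos (Real.exp_pos _)]
    exact key_ineq hb hl hω
  have hmgf : ∀ i, mgf (Z i) P l ≤ Real.exp (C * ∫ ω, (Z i ω) ^ 2 ∂P) := by
    intro i
    have h1 : mgf (Z i) P l ≤ ∫ ω, (1 + l * Z i ω + C * (Z i ω) ^ 2) ∂P := by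
      refine integral_mono_ae (hexpint i) (hbound i) ?_
      filter_upwards [hbd i] with ω hω
      exact key_ineq hb hl hω
    have hf1 : Integrable (fun ω => 1 + l * Z i ω) P := by
      exact (integrable_const 1).add ((hZint i).const_mul l)
    have hf2 : Integrable (fun ω => C * (Z i ω) ^ 2) P := (h2 i).const_mul C
    have hf3 : Integrable (fun ω => l * Z i ω) P := (hZint i).const_mul l
    have h2' : ∫ ω, (1 + l * Z i ω + C * (Z i ω) ^ 2) ∂P
        = 1 + C * ∫ ω, (Z i ω) ^ 2 ∂P := by
      rw [integral_add hf1 hf2, integral_add (integrable_const 1) hf3,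
        integral_const, integral_const_mul, integral_const_mul, hmean i]
      simp
    rw [h2'] at h1
    have := Real.add_one_le_exp (C * ∫ ω, (Z i ω) ^ 2 ∂P)
    linarith
  have hsum : ∫ ω, Real.exp (l * (∑ i, Z i) ω) ∂P ≤ Real.exp (C * V) := by
    have hmgfsum := hindep.mgf_sum hmeas (t := l) Finset.univ
    have hle : ∏ i, mgf (Z i) P l
        ≤ ∏ i, Real.exp (C * ∫ ω, (Z i ω) ^ 2 ∂P) :=
      Finset.prod_le_prod (fun i _ => mgf_nonneg) (fun i _ => hmgf i)
    have heq : ∏ i, Real.exp (C * ∫ ω, (Z i ω) ^ 2 ∂P) = Real.exp (C * V) := by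
      rw [← Real.exp_sum, hVdef, Finset.mul_sum]
    calc ∫ ω, Real.exp (l * (∑ i, Z i) ω) ∂P
        = mgf (∑ i, Z i) P l := rfl
      _ = ∏ i, mgf (Z i) P l := hmgfsum
      _ ≤ Real.exp (C * V) := heq ▸ hle
  have hsplit : ∫ ω, Real.exp (l * (∑ i, Z i ω) - C * V) ∂P
      = Real.exp (-(C * V)) * ∫ ω, Real.exp (l * (∑ i, Z i) ω) ∂P := by
    rw [← integral_const_mul]
    congr 1
    ext ω
    rw [Finset.sum_apply, sub_eq_add_neg, Real.exp_add, mul_comm]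
  rw [hsplit]
  calc Real.exp (-(C * V)) * ∫ ω, Real.exp (l * (∑ i, Z i) ω) ∂P
      ≤ Real.exp (-(C * V)) * Real.exp (C * V) := by
        exact mul_le_mul_of_nonneg_left hsum (Real.exp_pos _).le
    _ = 1 := by rw [← Real.exp_add, neg_add_cancel, Real.exp_zero]
end

section
/- Let D be a distribution over X × Y and ρ a distribution over hypotheses. Then L(MV_ρ) ≤ 4 E_{h∼ρ,h'∼ρ}[L(h,h')], where L(h,h') is the expected tandem loss. -/
open MeasureTheory

theorem second_order_tandem_bound
    {𝒳 𝒴 : Type*} [MeasurableSpace 𝒳] [MeasurableSpace 𝒴] [DecidableEq 𝒴]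
    (D : Measure (𝒳 × 𝒴)) [IsProbabilityMeasure D]
    {H : Type*} [Fintype H] (hyp : H → 𝒳 → 𝒴)
    (hmeas : ∀ h : H,
      Measurable (fun p : 𝒳 × 𝒴 => if hyp h p.1 ≠ p.2 then (1 : ℝ) else 0))
    (ρ : H → ℝ) (hρ0 : ∀ h, 0 ≤ ρ h) (hρ1 : ∑ h, ρ h = 1)
    (MV : 𝒳 → 𝒴)
    (hMVmeas : Measurable (fun p : 𝒳 × 𝒴 => if MV p.1 ≠ p.2 then (1 : ℝ) else 0))
    (hMV : ∀ x y, (∑ h, ρ h * (if hyp h x = y then (1 : ℝ) else 0))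
        ≤ ∑ h, ρ h * (if hyp h x = MV x then (1 : ℝ) else 0)) :
    ∫ p, (if MV p.1 ≠ p.2 then (1 : ℝ) else 0) ∂D
      ≤ 4 * (∑ h, ∑ h', ρ h * ρ h' *
          ∫ p, (if hyp h p.1 ≠ p.2 then (1 : ℝ) else 0) *
               (if hyp h' p.1 ≠ p.2 then (1 : ℝ) else 0) ∂D) := by
  classical
  set f : H → 𝒳 × 𝒴 → ℝ := fun h p => if hyp h p.1 ≠ p.2 then (1 : ℝ) else 0 with hf
  have hf01 : ∀ h p, 0 ≤ f h p ∧ f h p ≤ 1 := by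
    intro h p; simp only [hf]; split_ifs <;> norm_num
  -- integrability
  have hint : ∀ h h', Integrable (fun p => f h p * f h' p) D := by
    intro h h'
    refine (integrable_const (1 : ℝ)).mono' ((hmeas h).mul (hmeas h')).aestronglyMeasurable ?_
    filter_upwards with p
    have := hf01 h p; have := hf01 h' p
    rw [Real.norm_eq_abs, abs_of_nonneg (by nlinarith)]
    nlinarith
  have hintsum : Integrable (fun p => ∑ h, ∑ h', 4 * (ρ h * ρ h' * (f h p * f h' p))) D := by
    apply integrable_finset_sum
    intro h _
    apply integrable_finset_sum
    intro h' _
    exact ((hint h h').const_mul _).const_mul 4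
  have hMVint : Integrable (fun p : 𝒳 × 𝒴 => if MV p.1 ≠ p.2 then (1 : ℝ) else 0) D := by
    refine (integrable_const (1 : ℝ)).mono' hMVmeas.aestronglyMeasurable ?_
    filter_upwards with p
    rw [Real.norm_eq_abs]; split_ifs <;> norm_num
  -- pointwise bound
  have key : ∀ p : 𝒳 × 𝒴, (if MV p.1 ≠ p.2 then (1 : ℝ) else 0)
      ≤ ∑ h, ∑ h', 4 * (ρ h * ρ h' * (f h p * f h' p)) := by
    intro p
    have hsq : (∑ h, ∑ h', 4 * (ρ h * ρ h' * (f h p * f h' p)))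
        = 4 * (∑ h, ρ h * f h p) ^ 2 := by
      rw [sq, Finset.sum_mul_sum, Finset.mul_sum]
      refine Finset.sum_congr rfl fun h _ => ?_
      rw [Finset.mul_sum]
      refine Finset.sum_congr rfl fun h' _ => ?_
      ring
    rw [hsq]
    set Z := ∑ h, ρ h * f h p with hZ
    have hZ0 : 0 ≤ Z := Finset.sum_nonneg fun h _ =>
      mul_nonneg (hρ0 h) (hf01 h p).1
    by_cases hmv : MV p.1 = p.2
    · simp [hmv]; positivity
    · have h1 : (∑ h, ρ h * (if hyp h p.1 = MV p.1 then (1 : ℝ) else 0)) ≤ Z := by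
        refine Finset.sum_le_sum fun h _ => ?_
        by_cases hc : hyp h p.1 = MV p.1
        · have : hyp h p.1 ≠ p.2 := by rw [hc]; exact hmv
          simp [hf, hc, this, hmv]
        · simp [hc]
          exact mul_nonneg (hρ0 h) (hf01 h p).1
      have h2 : (∑ h, ρ h * (if hyp h p.1 = p.2 then (1 : ℝ) else 0)) = 1 - Z := by
        have e : ∀ h, ρ h * (if hyp h p.1 = p.2 then (1 : ℝ) else 0)
            = ρ h - ρ h * f h p := by
          intro h; simp only [hf]; by_cases hc : hyp h p.1 = p.2 <;> simp [hc]
        simp_rw [e]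
        rw [Finset.sum_sub_distrib, hρ1, hZ]
      have h3 := (hMV p.1 p.2).trans h1
      rw [h2] at h3
      have hZhalf : (1 : ℝ) / 2 ≤ Z := by linarith
      simp only [hmv, if_pos (show MV p.1 ≠ p.2 from hmv)]
      nlinarith
  have step1 : ∫ p, (if MV p.1 ≠ p.2 then (1 : ℝ) else 0) ∂D
      ≤ ∫ p, (∑ h, ∑ h', 4 * (ρ h * ρ h' * (f h p * f h' p))) ∂D :=
    integral_mono hMVint hintsum key
  refine step1.trans_eq ?_
  rw [integral_finset_sum _ (fun h _ => integrable_finset_sum _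
    (fun h' _ => ((hint h h').const_mul _).const_mul 4))]
  rw [Finset.mul_sum]
  refine Finset.sum_congr rfl fun h _ => ?_
  rw [integral_finset_sum _ (fun h' _ => ((hint h h').const_mul _).const_mul 4),
    Finset.mul_sum]
  refine Finset.sum_congr rfl fun h' _ => ?_
  calc ∫ a, 4 * (ρ h * ρ h' * (f h a * f h' a)) ∂D
      = ∫ a, (4 * (ρ h * ρ h')) • (f h a * f h' a) ∂D := by
        congr 1; funext a; simp only [smul_eq_mul]; ring
    _ = (4 * (ρ h * ρ h')) • ∫ a, f h a * f h' a ∂D := integral_smul _ _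
    _ = _ := by simp only [smul_eq_mul, hf]; ring
end

section
/- Let D be a distribution over X × Y, ρ a distribution over hypotheses, and μ < 1/2 a real number. Then L(MV_ρ) ≤ (E_{ρ²}[L(h,h')] − 2μ E_ρ[L(h)] + μ²) / (1/2 − μ)², where L(h) is the expected zero-one loss and L(h,h') the expected tandem loss. -/
open MeasureTheory

theorem parametric_CC_majority_vote_bound
    {𝒳 𝒴 : Type*} [MeasurableSpace 𝒳] [MeasurableSpace 𝒴] [DecidableEq 𝒴]
    (D : Measure (𝒳 × 𝒴)) [IsProbabilityMeasure D]
    {H : Type*} [Fintype H] (hyp : H → 𝒳 → 𝒴)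
    (hmeas : ∀ h : H,
      Measurable (fun p : 𝒳 × 𝒴 => if hyp h p.1 ≠ p.2 then (1 : ℝ) else 0))
    (ρ : H → ℝ) (hρ0 : ∀ h, 0 ≤ ρ h) (hρ1 : ∑ h, ρ h = 1)
    (μ : ℝ) (hμ : μ < 1/2)
    (MV : 𝒳 → 𝒴)
    (hMVmeas : Measurable (fun p : 𝒳 × 𝒴 => if MV p.1 ≠ p.2 then (1 : ℝ) else 0))
    (hMV : ∀ x y, (∑ h, ρ h * (if hyp h x = y then (1 : ℝ) else 0))
        ≤ ∑ h, ρ h * (if hyp h x = MV x then (1 : ℝ) else 0)) :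
    ∫ p, (if MV p.1 ≠ p.2 then (1 : ℝ) else 0) ∂D
      ≤ ((∑ h, ∑ h', ρ h * ρ h' *
          ∫ p, (if hyp h p.1 ≠ p.2 then (1 : ℝ) else 0) *
               (if hyp h' p.1 ≠ p.2 then (1 : ℝ) else 0) ∂D)
          - 2 * μ * (∑ h, ρ h * ∫ p, (if hyp h p.1 ≠ p.2 then (1 : ℝ) else 0) ∂D) + μ ^ 2) / (1/2 - μ) ^ 2 := by
  classical
  set c : ℝ := 1/2 - μ with hc
  have hcpos : (0:ℝ) < c := by simp only [hc]; linarith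
  set f : H → 𝒳 × 𝒴 → ℝ := fun h p => if hyp h p.1 ≠ p.2 then (1:ℝ) else 0 with hf
  have hf01 : ∀ h p, f h p = 0 ∨ f h p = 1 := by
    intro h p
    by_cases hh : hyp h p.1 ≠ p.2 <;> simp [hf, hh]
  have hfabs : ∀ h p, |f h p| ≤ 1 := by
    intro h p; rcases hf01 h p with h1 | h1 <;> simp [h1]
  have hfint : ∀ h, Integrable (f h) D := by
    intro h
    exact Integrable.mono' (integrable_const 1) (hmeas h).aestronglyMeasurable
      (Filter.Eventually.of_forall fun p => by simpa using hfabs h p)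
  have hffint : ∀ h h', Integrable (fun p => f h p * f h' p) D := by
    intro h h'
    refine Integrable.mono' (integrable_const 1) ((hmeas h).mul (hmeas h')).aestronglyMeasurable
      (Filter.Eventually.of_forall fun p => ?_)
    rw [Real.norm_eq_abs, abs_mul]
    exact mul_le_one₀ (hfabs h p) (abs_nonneg _) (hfabs h' p)
  set Z : 𝒳 × 𝒴 → ℝ := fun p => ∑ h, ρ h * f h p with hZ
  have hZmeas : Measurable Z := by
    apply Finset.measurable_sum
    intro h _
    exact (hmeas h).const_mul (ρ h)
  have hZle1 : ∀ p, Z p ≤ 1 := by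
    intro p
    calc Z p ≤ ∑ h, ρ h * 1 := by
          apply Finset.sum_le_sum
          intro h _
          exact mul_le_mul_of_nonneg_left (by rcases hf01 h p with h1|h1 <;> simp [h1]) (hρ0 h)
      _ = 1 := by simpa using hρ1
  have hZ0 : ∀ p, 0 ≤ Z p := by
    intro p
    apply Finset.sum_nonneg
    intro h _
    exact mul_nonneg (hρ0 h) (by rcases hf01 h p with h1|h1 <;> simp [h1])
  -- key pointwise: if MV is wrong then Z ≥ 1/2
  have hkey : ∀ p : 𝒳 × 𝒴, MV p.1 ≠ p.2 → (1:ℝ)/2 ≤ Z p := by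
    intro p hne
    have h1 : (∑ h, ρ h * (if hyp h p.1 = p.2 then (1:ℝ) else 0))
        ≤ ∑ h, ρ h * (if hyp h p.1 = MV p.1 then (1:ℝ) else 0) := hMV p.1 p.2
    have h2 : (∑ h, ρ h * (if hyp h p.1 = MV p.1 then (1:ℝ) else 0))
        ≤ ∑ h, ρ h * (1 - (if hyp h p.1 = p.2 then (1:ℝ) else 0)) := by
      apply Finset.sum_le_sum
      intro h _
      apply mul_le_mul_of_nonneg_left _ (hρ0 h)
      by_cases hh : hyp h p.1 = MV p.1
      · have hy : hyp h p.1 ≠ p.2 := by rw [hh]; exact hne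
        rw [if_pos hh, if_neg hy]; norm_num
      · rw [if_neg hh]
        split <;> norm_num
    have h3 : (∑ h, ρ h * (1 - (if hyp h p.1 = p.2 then (1:ℝ) else 0)))
        = 1 - ∑ h, ρ h * (if hyp h p.1 = p.2 then (1:ℝ) else 0) := by
      simp only [mul_sub, mul_one]
      rw [Finset.sum_sub_distrib, hρ1]
    have h4 : (∑ h, ρ h * (if hyp h p.1 = p.2 then (1:ℝ) else 0)) ≤ 1/2 := by
      rw [h3] at h2
      linarith [le_trans h1 h2]
    have h5 : Z p = 1 - ∑ h, ρ h * (if hyp h p.1 = p.2 then (1:ℝ) else 0) := by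
      rw [hZ]
      rw [← h3]
      apply Finset.sum_congr rfl
      intro h _
      congr 1
      by_cases hh : hyp h p.1 = p.2 <;> simp [hf, hh]
    rw [h5]; linarith
  set W : 𝒳 × 𝒴 → ℝ := fun p => (Z p - μ)^2 / c^2 with hW
  have hWint : Integrable W D := by
    refine Integrable.mono' (integrable_const ((1 + |μ|)^2 / c^2))
      ((((hZmeas.sub measurable_const).pow_const 2).div_const _).aestronglyMeasurable)
      (Filter.Eventually.of_forall fun p => ?_)
    have h1 : |Z p - μ| ≤ 1 + |μ| := by
      have := abs_sub_abs_le_abs_sub (Z p) μ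
      have hz : |Z p| ≤ 1 := abs_le.2 ⟨by linarith [hZ0 p], hZle1 p⟩
      calc |Z p - μ| ≤ |Z p| + |μ| := abs_sub _ _
        _ ≤ 1 + |μ| := by linarith
    have h2 : (Z p - μ)^2 ≤ (1 + |μ|)^2 := by
      rw [← sq_abs]
      exact pow_le_pow_left₀ (abs_nonneg _) h1 2
    rw [hW]
    rw [Real.norm_eq_abs, abs_div, abs_of_nonneg (sq_nonneg (Z p - μ)), abs_of_nonneg (sq_nonneg c)]
    exact div_le_div_of_nonneg_right h2 (sq_nonneg c)
  have hgint : Integrable (fun p : 𝒳 × 𝒴 => if MV p.1 ≠ p.2 then (1:ℝ) else 0) D := by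
    refine Integrable.mono' (integrable_const 1) hMVmeas.aestronglyMeasurable
      (Filter.Eventually.of_forall fun p => ?_)
    by_cases hh : MV p.1 ≠ p.2 <;> simp [hh]
  have hptwise : ∀ p : 𝒳 × 𝒴, (if MV p.1 ≠ p.2 then (1:ℝ) else 0) ≤ W p := by
    intro p
    by_cases hh : MV p.1 ≠ p.2
    · rw [if_pos hh, hW]
      rw [le_div_iff₀ (pow_pos hcpos 2), one_mul]
      have hzh := hkey p hh
      have : c ≤ Z p - μ := by rw [hc]; linarith
      exact pow_le_pow_left₀ (le_of_lt hcpos) this 2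
    · rw [if_neg hh]
      exact div_nonneg (sq_nonneg _) (sq_nonneg _)
  have hmono : ∫ p, (if MV p.1 ≠ p.2 then (1:ℝ) else 0) ∂D ≤ ∫ p, W p ∂D :=
    integral_mono hgint hWint hptwise
  -- compute ∫ W
  have hZint : Integrable Z D := by
    apply integrable_finset_sum
    intro h _
    exact (hfint h).const_mul (ρ h)
  have hZ2int : Integrable (fun p => Z p ^ 2) D := by
    refine Integrable.mono' (integrable_const 1) ((hZmeas.pow_const 2).aestronglyMeasurable)
      (Filter.Eventually.of_forall fun p => ?_)
    rw [Real.norm_eq_abs, abs_of_nonneg (sq_nonneg _)]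
    calc Z p ^ 2 ≤ 1 ^ 2 := pow_le_pow_left₀ (hZ0 p) (hZle1 p) 2
      _ = 1 := one_pow 2
  have hintZ : ∫ p, Z p ∂D = ∑ h, ρ h * ∫ p, f h p ∂D := by
    rw [hZ]
    rw [integral_finset_sum _ (fun h _ => (hfint h).const_mul (ρ h))]
    exact Finset.sum_congr rfl fun h _ => integral_const_mul _ _
  have hZ2eq : ∀ p, Z p ^ 2 = ∑ h, ∑ h', ρ h * ρ h' * (f h p * f h' p) := by
    intro p
    rw [hZ, sq, Finset.sum_mul_sum]
    apply Finset.sum_congr rfl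
    intro h _
    apply Finset.sum_congr rfl
    intro h' _
    ring
  have hintZ2 : ∫ p, Z p ^ 2 ∂D = ∑ h, ∑ h', ρ h * ρ h' * ∫ p, f h p * f h' p ∂D := by
    rw [show (fun p => Z p ^ 2) = fun p => ∑ h, ∑ h', ρ h * ρ h' * (f h p * f h' p) from
      funext hZ2eq]
    rw [integral_finset_sum _ (fun h _ => integrable_finset_sum _
      (fun h' _ => (hffint h h').const_mul _))]
    apply Finset.sum_congr rfl
    intro h _
    rw [integral_finset_sum _ (fun h' _ => (hffint h h').const_mul _)]
    exact Finset.sum_congr rfl fun h' _ => integral_const_mul _ _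
  have hWeq : ∫ p, W p ∂D
      = ((∫ p, Z p ^ 2 ∂D) - 2 * μ * (∫ p, Z p ∂D) + μ ^ 2) / c ^ 2 := by
    rw [hW]
    rw [show (fun p => (Z p - μ)^2 / c^2) = fun p => (Z p ^2 - 2*μ* Z p + μ^2) * (1/c^2) from
      funext fun p => by ring]
    rw [integral_mul_const]
    congr 1
    · rw [integral_add (by exact (hZ2int.sub ((hZint.const_mul (2*μ)))) ) (integrable_const _)]
      rw [integral_sub hZ2int (hZint.const_mul (2*μ))]
      rw [integral_const_mul _ Z, integral_const]
      simp [measure_univ]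
    · field_simp
  rw [hWeq, hintZ, hintZ2] at hmono
  exact hmono
end

section
/- Let D be a distribution over X × Y, ρ a distribution over hypotheses, and μ < 1/2. Define the expected μ-tandem loss L_μ(h,h') = E_D[(1[h(X)≠Y] − μ)(1[h'(X)≠Y] − μ)]. Then E_{ρ²}[L_μ(h,h')] = E_D[(E_ρ[1[h(X)≠Y]] − μ)²], and consequently L(MV_ρ) ≤ E_{ρ²}[L_μ(h,h')] / (1/2 − μ)². -/
open MeasureTheory

lemma integrable_of_bdd {α : Type*} [MeasurableSpace α] (D : Measure α)
    [IsFiniteMeasure D] {f : α → ℝ} (hf : Measurable f) (C : ℝ)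
    (hC : ∀ x, |f x| ≤ C) : Integrable f D := by
  apply (integrable_const C).mono' hf.aestronglyMeasurable
  filter_upwards with x
  simpa using hC x

theorem mu_tandem_bound
    {𝒳 𝒴 : Type*} [MeasurableSpace 𝒳] [MeasurableSpace 𝒴] [DecidableEq 𝒴]
    (D : Measure (𝒳 × 𝒴)) [IsProbabilityMeasure D]
    {H : Type*} [Fintype H] (hyp : H → 𝒳 → 𝒴)
    (hmeas : ∀ h : H,
      Measurable (fun p : 𝒳 × 𝒴 => if hyp h p.1 ≠ p.2 then (1 : ℝ) else 0))
    (ρ : H → ℝ) (hρ0 : ∀ h, 0 ≤ ρ h) (hρ1 : ∑ h, ρ h = 1)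
    (μ : ℝ) (hμ : μ < 1/2)
    (MV : 𝒳 → 𝒴)
    (hMVmeas : Measurable (fun p : 𝒳 × 𝒴 => if MV p.1 ≠ p.2 then (1 : ℝ) else 0))
    (hMV : ∀ x y, (∑ h, ρ h * (if hyp h x = y then (1 : ℝ) else 0))
        ≤ ∑ h, ρ h * (if hyp h x = MV x then (1 : ℝ) else 0)) :
    (∑ h, ∑ h', ρ h * ρ h' *
          ∫ p, ((if hyp h p.1 ≠ p.2 then (1 : ℝ) else 0) - μ) *
               ((if hyp h' p.1 ≠ p.2 then (1 : ℝ) else 0) - μ) ∂D)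
      = ∫ p, ((∑ h, ρ h * (if hyp h p.1 ≠ p.2 then (1 : ℝ) else 0)) - μ) ^ 2 ∂D ∧
    ∫ p, (if MV p.1 ≠ p.2 then (1 : ℝ) else 0) ∂D
      ≤ (∑ h, ∑ h', ρ h * ρ h' *
          ∫ p, ((if hyp h p.1 ≠ p.2 then (1 : ℝ) else 0) - μ) *
               ((if hyp h' p.1 ≠ p.2 then (1 : ℝ) else 0) - μ) ∂D) / (1/2 - μ) ^ 2 := by
  set f : H → 𝒳 × 𝒴 → ℝ := fun h p => if hyp h p.1 ≠ p.2 then 1 else 0 with hf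
  have hf01 : ∀ h p, f h p = 0 ∨ f h p = 1 := by
    intro h p
    by_cases hc : hyp h p.1 ≠ p.2 <;> simp [hf, hc]
  have hfabs : ∀ h p, |f h p - μ| ≤ 1 + |μ| := by
    intro h p
    calc |f h p - μ| ≤ |f h p| + |μ| := abs_sub _ _
    _ ≤ 1 + |μ| := by
        rcases hf01 h p with hc | hc <;> simp [hc]
  have hint : ∀ h h', Integrable (fun p => (f h p - μ) * (f h' p - μ)) D := by
    intro h h'
    apply integrable_of_bdd D
      (((hmeas h).sub measurable_const).mul ((hmeas h').sub measurable_const))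
      ((1 + |μ|) * (1 + |μ|))
    intro p
    rw [Pi.mul_apply, Pi.sub_apply, Pi.sub_apply, abs_mul]
    exact mul_le_mul (hfabs h p) (hfabs h' p) (abs_nonneg _) (by positivity)
  set Z : 𝒳 × 𝒴 → ℝ := fun p => ∑ h, ρ h * f h p with hZdef
  have hZmeas : Measurable Z := by
    apply Finset.measurable_sum
    intro h _
    exact (hmeas h).const_mul _
  have hZabs : ∀ p, |Z p - μ| ≤ 1 + |μ| := by
    intro p
    have h0 : 0 ≤ Z p := Finset.sum_nonneg fun h _ => by
      rcases hf01 h p with hc | hc <;> simp [hc, hρ0 h]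
    have h1 : Z p ≤ 1 := by
      rw [← hρ1]
      apply Finset.sum_le_sum
      intro h _
      rcases hf01 h p with hc | hc <;> simp [hc, hρ0 h]
    calc |Z p - μ| ≤ |Z p| + |μ| := abs_sub _ _
    _ ≤ 1 + |μ| := by
        rw [abs_of_nonneg h0]; linarith
  have key : ∀ p, (Z p - μ) ^ 2 = ∑ h, ∑ h', ρ h * ρ h' * ((f h p - μ) * (f h' p - μ)) := by
    intro p
    have h1 : Z p - μ = ∑ h, ρ h * (f h p - μ) := by
      simp [hZdef, mul_sub, Finset.sum_sub_distrib, ← Finset.sum_mul, hρ1]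
    rw [h1, sq, Finset.sum_mul_sum]
    exact Finset.sum_congr rfl fun h _ => Finset.sum_congr rfl fun h' _ => by ring
  have part1 : (∑ h, ∑ h', ρ h * ρ h' * ∫ p, (f h p - μ) * (f h' p - μ) ∂D)
      = ∫ p, (Z p - μ) ^ 2 ∂D := by
    have e0 : ∀ h h', ρ h * ρ h' * ∫ p, (f h p - μ) * (f h' p - μ) ∂D
        = ∫ p, ρ h * ρ h' * ((f h p - μ) * (f h' p - μ)) ∂D := by
      intro h h'
      rw [integral_const_mul]
    simp_rw [e0]
    have e1 : ∀ h : H, (∑ h', ∫ p, ρ h * ρ h' * ((f h p - μ) * (f h' p - μ)) ∂D)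
        = ∫ p, ∑ h', ρ h * ρ h' * ((f h p - μ) * (f h' p - μ)) ∂D :=
      fun h => (integral_finset_sum _ fun h' _ => (hint h h').const_mul _).symm
    simp_rw [e1]
    rw [← integral_finset_sum _ fun h _ =>
      integrable_finset_sum _ fun h' _ => (hint h h').const_mul _]
    exact integral_congr_ae (Filter.Eventually.of_forall fun p => (key p).symm)
  have c2pos : (0:ℝ) < (1/2 - μ) ^ 2 := pow_pos (by linarith) 2
  have hptwise : ∀ p : 𝒳 × 𝒴,
      (if MV p.1 ≠ p.2 then (1:ℝ) else 0) ≤ (Z p - μ) ^ 2 / (1/2 - μ) ^ 2 := by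
    intro p
    by_cases hc : MV p.1 ≠ p.2
    · rw [if_pos hc]
      rw [le_div_iff₀ c2pos, one_mul]
      have hZhalf : 1/2 ≤ Z p := by
        have h1 : (∑ h, ρ h * (if hyp h p.1 = p.2 then (1:ℝ) else 0))
            ≤ ∑ h, ρ h * (if hyp h p.1 = MV p.1 then (1:ℝ) else 0) := hMV p.1 p.2
        have h2 : (∑ h, ρ h * (if hyp h p.1 = MV p.1 then (1:ℝ) else 0)) ≤ Z p := by
          apply Finset.sum_le_sum
          intro h _
          by_cases hd : hyp h p.1 = MV p.1
          · simp [hd, hf, hc]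
          · have : (0:ℝ) ≤ f h p := by rcases hf01 h p with he | he <;> simp [he]
            simpa [hd] using mul_nonneg (hρ0 h) this
        have h3 : (∑ h, ρ h * (if hyp h p.1 = p.2 then (1:ℝ) else 0)) = 1 - Z p := by
          have e : ∀ h, ρ h * (if hyp h p.1 = p.2 then (1:ℝ) else 0) = ρ h - ρ h * f h p := by
            intro h
            by_cases hd : hyp h p.1 = p.2 <;> simp [hd, hf]
          simp_rw [e, Finset.sum_sub_distrib, hρ1]
          rfl
        linarith
      have : 1/2 - μ ≤ Z p - μ := by linarith
      exact pow_le_pow_left₀ (by linarith) this 2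
    · rw [if_neg hc]
      positivity
  have hgint : Integrable (fun p : 𝒳 × 𝒴 => if MV p.1 ≠ p.2 then (1:ℝ) else 0) D := by
    apply integrable_of_bdd D hMVmeas 1
    intro p
    by_cases hc : MV p.1 ≠ p.2 <;> simp [hc]
  have hZint : Integrable (fun p => (Z p - μ) ^ 2 / (1/2 - μ) ^ 2) D := by
    apply integrable_of_bdd D
      ((((hZmeas.sub measurable_const).pow_const 2).div_const _))
      ((1 + |μ|) ^ 2 / (1/2 - μ) ^ 2)
    intro p
    rw [abs_div, abs_of_nonneg (le_of_lt c2pos), abs_pow]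
    gcongr
    exact hZabs p
  have part2 := integral_mono hgint hZint hptwise
  rw [integral_div] at part2
  refine ⟨part1, ?_⟩
  rw [part1]
  exact part2
end

section
/- Suppose E_ρ[L(h)] < 1/2 and E_{ρ²}[L(h,h')] > (1/2) E_ρ[L(h)], with E_{ρ²}[L(h,h')] ≥ E_ρ[L(h)]². Then 2 E_ρ[L(h)] < (E_{ρ²}[L(h,h')] − E_ρ[L(h)]²)/(1/4 + E_{ρ²}[L(h,h')] − E_ρ[L(h)]); conversely, if E_{ρ²}[L(h,h')] < (1/2) E_ρ[L(h)], the reverse strict inequality holds. -/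
theorem first_vs_second_order_oracle_comparison
    (G T : ℝ) (hG0 : 0 ≤ G) (hG : G < 1/2) (hTG : G ^ 2 ≤ T) :
    (T > (1/2) * G →
      2 * G < (T - G ^ 2) / (1/4 + T - G)) ∧
    (T < (1/2) * G →
      (T - G ^ 2) / (1/4 + T - G) < 2 * G) := by
  have hden : 0 < 1/4 + T - G := by nlinarith [sq_nonneg (1/2 - G)]
  constructor
  · intro h
    rw [lt_div_iff₀ hden]
    nlinarith
  · intro h
    rw [div_lt_iff₀ hden]
    nlinarith
end

section
/- Let G and T be real numbers with G² ≤ T ≤ G and 0 ≤ G < 1/2, and suppose T ≠ G/2. Let μ* = G − (T − G²)/(1/2 − G). Then (T − 2μ*G + (μ*)²)/(1/2 − μ*)² < 4T, i.e., the parametric Chebyshev-Cantelli bound at the optimal offset μ* is strictly smaller than the second order Markov bound; equality holds if and only if T = G/2 (in which case μ* = 0). -/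
theorem parametric_CC_vs_second_order_markov
    (G T : ℝ) (hG0 : 0 ≤ G) (hG : G < 1/2) (hT1 : G ^ 2 ≤ T) (hT2 : T ≤ G) :
    (T ≠ (1/2) * G →
      (T - 2 * (G - (T - G ^ 2) / (1/2 - G)) * G + (G - (T - G ^ 2) / (1/2 - G)) ^ 2)
          / (1/2 - (G - (T - G ^ 2) / (1/2 - G))) ^ 2 < 4 * T) ∧
    ((T - 2 * (G - (T - G ^ 2) / (1/2 - G)) * G + (G - (T - G ^ 2) / (1/2 - G)) ^ 2)
          / (1/2 - (G - (T - G ^ 2) / (1/2 - G))) ^ 2 = 4 * T ↔ T = (1/2) * G) ∧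
    (T = (1/2) * G → G - (T - G ^ 2) / (1/2 - G) = 0) := by
  have hd : (0:ℝ) < 1/2 - G := by linarith
  have hd' : (1/2 - G : ℝ) ≠ 0 := ne_of_gt hd
  set s : ℝ := (T - G^2) / (1/2 - G) with hs_def
  have hseq : s * (1/2 - G) = T - G^2 := div_mul_cancel₀ _ hd'
  have hs : 0 ≤ s := div_nonneg (by linarith) hd.le
  have hden : (0:ℝ) < 1/2 - (G - s) := by linarith
  have hD : (0:ℝ) < T - G + 1/4 := by nlinarith
  have key : (T - 2 * (G - s) * G + (G - s) ^ 2) / (1/2 - (G - s)) ^ 2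
      = (T - G^2)/(T - G + 1/4) := by
    rw [div_eq_div_iff (by positivity) (ne_of_gt hD)]
    linear_combination (s*(1/2-G) - (T-G^2)) * hseq
  have hmu : T = (1/2) * G → G - s = 0 := by
    intro h
    have : s = G := by
      rw [hs_def, h, div_eq_iff hd']; ring
    linarith
  refine ⟨?_, ?_, hmu⟩
  · intro hne
    rw [key, div_lt_iff₀ hD]
    have hne2 : 2*T - G ≠ 0 := fun h => hne (by linarith)
    have h2 : 0 < (2*T - G)^2 :=
      lt_of_le_of_ne (sq_nonneg _) (Ne.symm (pow_ne_zero 2 hne2))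
    nlinarith
  · rw [key]
    constructor
    · intro h
      rw [div_eq_iff (ne_of_gt hD)] at h
      have h0 : (2*T - G)^2 = 0 := by nlinarith
      have := pow_eq_zero_iff (n := 2) (by norm_num) |>.mp h0
      linarith
    · intro h
      rw [div_eq_iff (ne_of_gt hD)]
      nlinarith
end

section
/- The function γ ↦ φ(γb)/(γ²b²) with φ(x) = e^x − x − 1 and b > 0 is strictly increasing in γ > 0, satisfies lim_{γ→0⁺} φ(γb)/(γ²b²) = 1/2, and equals e − 2 at γ = 1/b. Consequently, for all γ ∈ (0, 1/b], φ(γb)/(γb²) ≤ (e−2)γ, i.e., the PAC-Bayes-Bennett variance coefficient is at most the PAC-Bayes-Bernstein coefficient. -/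
open Real Filter Set

lemma aux_p_pos (x : ℝ) (hx : 0 < x) : 0 < (x - 1) * Real.exp x + 1 := by
  have hmono : StrictMonoOn (fun x : ℝ => (x - 1) * Real.exp x + 1) (Set.Ici 0) := by
    apply strictMonoOn_of_deriv_pos (convex_Ici 0)
    · fun_prop
    · intro x hx
      rw [interior_Ici] at hx
      have h : HasDerivAt (fun x : ℝ => (x - 1) * Real.exp x + 1)
          (x * Real.exp x) x := by
        have := (((hasDerivAt_id x).sub_const 1).mul (Real.hasDerivAt_exp x)).add_const 1
        exact this.congr_deriv (by simp only [id_eq]; ring)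
      rw [h.deriv]
      exact mul_pos hx (Real.exp_pos x)
  have := hmono Set.self_mem_Ici (Set.mem_Ici.mpr hx.le) hx
  simpa using this

lemma aux_h_pos (x : ℝ) (hx : 0 < x) : 0 < (x - 2) * Real.exp x + x + 2 := by
  have hmono : StrictMonoOn (fun x : ℝ => (x - 2) * Real.exp x + x + 2) (Set.Ici 0) := by
    apply strictMonoOn_of_deriv_pos (convex_Ici 0)
    · fun_prop
    · intro x hx
      rw [interior_Ici] at hx
      have h : HasDerivAt (fun x : ℝ => (x - 2) * Real.exp x + x + 2)
          ((x - 1) * Real.exp x + 1) x := by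
        have := ((((hasDerivAt_id x).sub_const 2).mul (Real.hasDerivAt_exp x)).add
          (hasDerivAt_id x)).add_const 2
        exact this.congr_deriv (by simp only [id_eq]; ring)
      rw [h.deriv]
      exact aux_p_pos x hx
  have := hmono Set.self_mem_Ici (Set.mem_Ici.mpr hx.le) hx
  simpa using this

lemma aux_g_mono : StrictMonoOn (fun x : ℝ => (Real.exp x - x - 1) / x ^ 2) (Set.Ioi 0) := by
  apply strictMonoOn_of_deriv_pos (convex_Ioi 0)
  · apply ContinuousOn.div (by fun_prop) (by fun_prop)
    intro x hx
    have : (0:ℝ) < x := hx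
    positivity
  · intro x hx
    rw [interior_Ioi] at hx
    have hx0 : x ≠ 0 := ne_of_gt hx
    have h : HasDerivAt (fun x : ℝ => (Real.exp x - x - 1) / x ^ 2)
        (((Real.exp x - 1) * x ^ 2 - (Real.exp x - x - 1) * (2 * x ^ 1)) / (x ^ 2) ^ 2) x := by
      exact (((Real.hasDerivAt_exp x).sub (hasDerivAt_id x)).sub_const 1).div
        (hasDerivAt_pow 2 x) (by positivity)
    rw [h.deriv]
    have hnum : (Real.exp x - 1) * x ^ 2 - (Real.exp x - x - 1) * (2 * x ^ 1)
        = x * ((x - 2) * Real.exp x + x + 2) := by ring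
    rw [hnum]
    exact div_pos (mul_pos hx (aux_h_pos x hx)) (by positivity)

lemma aux_limit_bound (x : ℝ) (hx : 0 < x) (hx1 : x ≤ 1) :
    |(Real.exp x - x - 1) / x ^ 2 - 1 / 2| ≤ 2 / 9 * x := by
  have hb := Real.exp_bound (x := x) (by rw [abs_of_pos hx]; exact hx1) (n := 3) (by norm_num)
  have hsum : ∑ m ∈ Finset.range 3, x ^ m / (m.factorial : ℝ) = 1 + x + x ^ 2 / 2 := by
    simp [Finset.sum_range_succ]
  rw [hsum, abs_of_pos hx] at hb
  have hx2 : (0:ℝ) < x ^ 2 := by positivity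
  have key : (Real.exp x - x - 1) / x ^ 2 - 1 / 2
      = (Real.exp x - (1 + x + x ^ 2 / 2)) / x ^ 2 := by
    field_simp
    ring
  rw [key, abs_div, abs_of_pos hx2, div_le_iff₀ hx2]
  calc |Real.exp x - (1 + x + x ^ 2 / 2)| ≤ x ^ 3 * ((3:ℕ).succ / ((3:ℕ).factorial * 3)) := hb
    _ = 2 / 9 * x * x ^ 2 := by simp [Nat.factorial]; ring

theorem bennett_coefficient_properties (b : ℝ) (hb : 0 < b) :
    StrictMonoOn (fun γ : ℝ => (Real.exp (γ * b) - γ * b - 1) / (γ ^ 2 * b ^ 2))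
      (Set.Ioi (0 : ℝ)) ∧
    Filter.Tendsto (fun γ : ℝ => (Real.exp (γ * b) - γ * b - 1) / (γ ^ 2 * b ^ 2))
      (nhdsWithin 0 (Set.Ioi (0 : ℝ))) (nhds (1/2)) ∧
    (Real.exp ((1/b) * b) - (1/b) * b - 1) / ((1/b) ^ 2 * b ^ 2) = Real.exp 1 - 2 ∧
    ∀ γ : ℝ, γ ∈ Set.Ioc (0 : ℝ) (1/b) →
      (Real.exp (γ * b) - γ * b - 1) / (γ * b ^ 2) ≤ (Real.exp 1 - 2) * γ := by
  have hb0 : b ≠ 0 := ne_of_gt hb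
  have hfg : ∀ γ : ℝ, (Real.exp (γ * b) - γ * b - 1) / (γ ^ 2 * b ^ 2)
      = (Real.exp (γ * b) - γ * b - 1) / (γ * b) ^ 2 := by
    intro γ; rw [mul_pow]
  -- Part 1 : strict monotonicity
  have hmono : StrictMonoOn (fun γ : ℝ => (Real.exp (γ * b) - γ * b - 1) / (γ ^ 2 * b ^ 2))
      (Set.Ioi (0 : ℝ)) := by
    intro x hx y hy hxy
    simp only [hfg]
    exact aux_g_mono (Set.mem_Ioi.mpr (mul_pos hx hb)) (Set.mem_Ioi.mpr (mul_pos hy hb))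
      (mul_lt_mul_of_pos_right hxy hb)
  -- Part 3 : value at 1/b
  have hval : (Real.exp ((1/b) * b) - (1/b) * b - 1) / ((1/b) ^ 2 * b ^ 2) = Real.exp 1 - 2 := by
    have h1 : (1/b) * b = 1 := by field_simp
    have h2 : ((1:ℝ)/b) ^ 2 * b ^ 2 = 1 := by field_simp
    rw [h1, h2, div_one]
    ring
  refine ⟨hmono, ?_, hval, ?_⟩
  -- Part 2 : limit
  · rw [tendsto_iff_dist_tendsto_zero]
    apply squeeze_zero' (g := fun γ => 2 / 9 * (γ * b))
    · filter_upwards with γ using dist_nonneg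
    · have hmem : Set.Ioo (0:ℝ) (1/b) ∈ nhdsWithin 0 (Set.Ioi (0:ℝ)) :=
        Ioo_mem_nhdsGT_of_mem ⟨le_refl 0, by positivity⟩
      filter_upwards [hmem] with γ hγ
      have hγ0 : 0 < γ := hγ.1
      have hγb : γ * b ≤ 1 := by
        have := hγ.2
        rw [lt_div_iff₀ hb] at this
        exact this.le
      rw [Real.dist_eq, hfg γ]
      exact aux_limit_bound (γ * b) (mul_pos hγ0 hb) hγb
    · have : Filter.Tendsto (fun γ : ℝ => 2 / 9 * (γ * b)) (nhds 0) (nhds (2 / 9 * (0 * b))) :=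
        (Continuous.tendsto (by fun_prop) 0)
      simpa using this.mono_left nhdsWithin_le_nhds
  -- Part 4 : the inequality
  · intro γ hγ
    obtain ⟨hγ0, hγb⟩ := hγ
    have hle : (Real.exp (γ * b) - γ * b - 1) / (γ ^ 2 * b ^ 2)
        ≤ (Real.exp ((1/b) * b) - (1/b) * b - 1) / ((1/b) ^ 2 * b ^ 2) :=
      hmono.monotoneOn (Set.mem_Ioi.mpr hγ0) (Set.mem_Ioi.mpr (by positivity)) hγb
    rw [hval] at hle
    have heq : (Real.exp (γ * b) - γ * b - 1) / (γ * b ^ 2)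
        = γ * ((Real.exp (γ * b) - γ * b - 1) / (γ ^ 2 * b ^ 2)) := by
      field_simp
    rw [heq]
    calc γ * ((Real.exp (γ * b) - γ * b - 1) / (γ ^ 2 * b ^ 2))
        ≤ γ * (Real.exp 1 - 2) := mul_le_mul_of_nonneg_left hle hγ0.le
      _ = (Real.exp 1 - 2) * γ := by ring
end
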